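/- Fix a prime p. The (possibly non-unital) subring of ∏_{n=3}^∞ M_n(F_p) generated by the three elements a = (a_n)_n, a^{−1} = (a_n^{−1})_n and b = (b_n)_n contains the restricted direct sum ⊕_{n=3}^∞ M_n(F_p) (all elements with only finitely many nonzero coordinates). In particular the ring R contains ⊕_{n=3}^∞ M_n(F_p). -/

import Mathlib

/-- The Cartesian product ring `∏_{n ≥ 3} M_n(F_p)` (the `n`-th coordinate, `n ≥ 3`,
being indexed here by `n - 3`). -/
abbrev BigM (p : ℕ) : Type :=
  ∀ n : ℕ, Matrix (Fin (n + 3)) (Fin (n + 3)) (ZMod p)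

/-- `a = (a_n)_n` where `a_n = e_{1,2} + e_{2,3} + ⋯ + e_{n-1,n} + e_{n,1}` is the
permutation matrix of the `n`-cycle. -/
def aElt (p : ℕ) : BigM p :=
  fun n => Matrix.of fun i j => if j = finRotate (n + 3) i then 1 else 0

/-- `a⁻¹ = (a_n⁻¹)_n`, the coordinatewise inverse of `a`, i.e. the permutation matrix of
the inverse cycle in each coordinate. -/
def aInvElt (p : ℕ) : BigM p :=
  fun n => Matrix.of fun i j => if j = (finRotate (n + 3)).symm i then 1 else 0

/-- `b = (b_n)_n` where `b_n = e_{1,2}` is the matrix unit at position `(1,2)`. -/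
def bElt (p : ℕ) : BigM p :=
  fun _ => Matrix.single 0 1 1

/-- `c = (c_n)_n` where `c_n = e_{2,1}` is the matrix unit at position `(2,1)`. -/
def cElt (p : ℕ) : BigM p :=
  fun _ => Matrix.single 1 0 1

namespace KassabovProof

open Matrix Finset ArithmeticFunction
open Fin.NatCast Fin.CommRing
open scoped ArithmeticFunction.Moebius ArithmeticFunction.zeta

/-- The permutation matrix of `e`. -/
def pM (p N : ℕ) (e : Equiv.Perm (Fin N)) : Matrix (Fin N) (Fin N) (ZMod p) :=
  Matrix.of fun i j => if j = e i then 1 else 0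

lemma pM_mul (p N : ℕ) (e f : Equiv.Perm (Fin N)) [NeZero N] :
    pM p N e * pM p N f = pM p N (e.trans f) := by
  ext i j
  simp only [pM, Matrix.mul_apply, Matrix.of_apply, ite_mul, one_mul, zero_mul, mul_ite, mul_one,
    mul_zero, Equiv.trans_apply]
  rw [Finset.sum_eq_single (e i)] <;> simp +contextual <;> congr

lemma pM_one (p N : ℕ) [NeZero N] : pM p N 1 = 1 := by
  ext i j
  simp [pM, Matrix.one_apply, eq_comm]

lemma pM_pow (p N : ℕ) (e : Equiv.Perm (Fin N)) [NeZero N] (m : ℕ) :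
    pM p N e ^ m = pM p N (e ^ m) := by
  induction m with
  | zero => simp [pM_one]
  | succ m ih =>
      rw [pow_succ, ih, pM_mul, pow_succ']
      rfl

lemma mul_std_mul (p N : ℕ) [NeZero N] (A B : Matrix (Fin N) (Fin N) (ZMod p))
    (u v : Fin N) :
    A * Matrix.single u v 1 * B = Matrix.of fun i j => A i u * B v j := by
  ext i j
  simp [Matrix.mul_apply, Matrix.single, ite_and, mul_ite, ite_mul,
    Finset.sum_ite_eq, Finset.sum_ite_eq', Finset.mul_sum, Finset.sum_mul]

lemma pM_E_pM (p N : ℕ) [NeZero N] (e f : Equiv.Perm (Fin N)) (u v : Fin N) :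
    pM p N e * Matrix.single u v (1 : ZMod p) * pM p N f
      = Matrix.single (e.symm u) (f v) 1 := by
  rw [mul_std_mul]
  ext i j
  simp only [Matrix.of_apply, pM, Matrix.single, ite_and]
  by_cases h1 : e.symm u = i
  · have : u = e i := by rw [← h1, Equiv.apply_symm_apply]
    by_cases h2 : j = f v <;> simp_all [eq_comm]
  · have : ¬ (u = e i) := fun hh => h1 (by rw [hh, Equiv.symm_apply_apply])
    simp_all

lemma std_mul_std (p N : ℕ) [NeZero N] (M : Matrix (Fin N) (Fin N) (ZMod p)) (u v : Fin N) :
    Matrix.single u v (1 : ZMod p) * M * Matrix.single u v 1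
      = M v u • Matrix.single u v 1 := by
  ext i j
  simp [Matrix.mul_apply, Matrix.single, Finset.sum_ite_eq, ite_and, mul_ite, ite_mul,
    Finset.sum_ite_eq', eq_comm, smul_ite]
  split_ifs <;> simp_all [mul_comm]

lemma finRotate_pow (N m : ℕ) (i : Fin (N + 1)) :
    (finRotate (N + 1) ^ m) i = i + (m : Fin (N + 1)) := by
  induction m with
  | zero => simp
  | succ m ih =>
      rw [pow_succ', Equiv.Perm.mul_apply, finRotate_succ_apply, ih]
      push_cast
      ring

lemma fin_add_cast_eq_zero (N : ℕ) (i : Fin (N + 3)) (m : ℕ) (hm : i.val + m = N + 3) :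
    i + (m : Fin (N + 3)) = 0 := by
  rw [← Fin.cast_val_eq_self i, ← Nat.cast_add, hm, Fin.natCast_self]

lemma fin_one_add_cast (N : ℕ) (j : Fin (N + 3)) (m : ℕ) (hm : 1 + m = N + 3 + j.val) :
    (1 : Fin (N + 3)) + (m : Fin (N + 3)) = j := by
  have h1 : (1 : Fin (N + 3)) = ((1 : ℕ) : Fin (N + 3)) := by simp
  rw [h1, ← Nat.cast_add, hm, Nat.cast_add, Fin.natCast_self, zero_add, Fin.cast_val_eq_self]

lemma moebius_filter_sum (k q : ℕ) (hk : k ≠ 0) (hq : q ≠ 0) :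
    ∑ d ∈ k.divisors, (if q ∣ d then (μ (k / d) : ℤ) else 0)
      = if k = q then 1 else 0 := by
  by_cases hqk : q ∣ k
  · have h1 : ∑ d ∈ k.divisors, (if q ∣ d then (μ (k / d) : ℤ) else 0)
        = ∑ d ∈ k.divisors, (if d ∣ k / q then (μ d : ℤ) else 0) := by
      rw [← Nat.sum_div_divisors k (fun d => if q ∣ d then (μ (k / d) : ℤ) else 0)]
      refine Finset.sum_congr rfl fun d hd => ?_
      have hdk : d ∣ k := (Nat.mem_divisors.mp hd).1
      rw [Nat.div_div_self hdk hk]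
      congr 1
      rw [Nat.dvd_div_iff_mul_dvd hdk, Nat.dvd_div_iff_mul_dvd hqk, mul_comm]
    rw [h1, ← Finset.sum_filter]
    have h2 : k.divisors.filter (· ∣ k / q) = (k / q).divisors := by
      ext d
      simp only [Finset.mem_filter, Nat.mem_divisors]
      constructor
      · rintro ⟨⟨-, -⟩, h⟩
        exact ⟨h, Nat.div_ne_zero_iff_of_dvd hqk |>.mpr ⟨hk, hq⟩⟩
      · rintro ⟨h, h2⟩
        exact ⟨⟨h.trans (Nat.div_dvd_of_dvd hqk), hk⟩, h⟩
    rw [h2]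
    have h3 := congrArg (fun f : ArithmeticFunction ℤ => f (k / q)) moebius_mul_coe_zeta
    simp only [coe_mul_zeta_apply, ArithmeticFunction.one_apply] at h3
    rw [h3]
    have : k / q = 1 ↔ k = q := by
      constructor
      · intro h
        have := Nat.div_mul_cancel hqk
        rw [h, one_mul] at this; exact this.symm
      · intro h; rw [h, Nat.div_self (Nat.pos_of_ne_zero hq)]
    simp [this]
  · have hne : k ≠ q := fun h => hqk (h ▸ dvd_refl k)
    rw [if_neg hne]
    refine Finset.sum_eq_zero fun d hd => ?_
    rw [if_neg]
    exact fun hqd => hqk (hqd.trans (Nat.mem_divisors.mp hd).1)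

lemma aElt_apply (p n : ℕ) : aElt p n = pM p (n + 3) (finRotate (n + 3)) := rfl

lemma bab_apply (p m n : ℕ) :
    (bElt p * aElt p ^ m * bElt p) n
      = if (n + 3) ∣ (m + 1) then Matrix.single (0 : Fin (n + 3)) 1 1 else 0 := by
  have h0 : (bElt p * aElt p ^ m * bElt p) n
      = Matrix.single (0 : Fin (n + 3)) 1 1 * (aElt p n) ^ m * Matrix.single 0 1 1 := rfl
  rw [h0, aElt_apply, pM_pow, std_mul_std]
  have h1 : pM p (n + 3) (finRotate (n + 3) ^ m) 1 0
      = if (0 : Fin (n + 3)) = (finRotate (n + 3) ^ m) 1 then 1 else 0 := rfl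
  have h2 : (finRotate (n + 3) ^ m) (1 : Fin (n + 3)) = ((1 + m : ℕ) : Fin (n + 3)) := by
    rw [finRotate_pow]
    push_cast
    ring
  rw [h1, h2]
  have h3 : ((0 : Fin (n + 3)) = ((1 + m : ℕ) : Fin (n + 3))) ↔ (n + 3) ∣ (m + 1) := by
    rw [eq_comm, Fin.natCast_eq_zero, Nat.add_comm 1 m]
  by_cases h : (n + 3) ∣ (m + 1)
  · rw [if_pos (h3.mpr h), if_pos h, one_smul]
  · rw [if_neg (fun hh => h (h3.mp hh)), if_neg h, zero_smul]

/-- The Möbius-inverted element: it equals `e_{1,2}` in coordinate `k - 3` and `0` elsewhere. -/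
def gElt (p k : ℕ) : BigM p :=
  ∑ d ∈ k.divisors, (μ (k / d)) • (bElt p * aElt p ^ (d - 1) * bElt p)

lemma gElt_apply (p k n : ℕ) (hk : k ≠ 0) :
    gElt p k n = if n + 3 = k then Matrix.single 0 1 1 else 0 := by
  have h0 : gElt p k n
      = ∑ d ∈ k.divisors, (μ (k / d)) • ((bElt p * aElt p ^ (d - 1) * bElt p) n) := by
    rw [gElt, Finset.sum_apply]
    exact Finset.sum_congr rfl fun d _ => rfl
  rw [h0]
  have h1 : ∀ d ∈ k.divisors, (μ (k / d)) • ((bElt p * aElt p ^ (d - 1) * bElt p) n)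
      = (if (n + 3) ∣ d then (μ (k / d) : ℤ) else 0)
          • Matrix.single (0 : Fin (n + 3)) 1 (1 : ZMod p) := by
    intro d hd
    have hd1 : d - 1 + 1 = d := Nat.succ_pred_eq_of_pos (Nat.pos_of_mem_divisors hd)
    rw [bab_apply, hd1]
    split_ifs <;> simp
  rw [Finset.sum_congr rfl h1, ← Finset.sum_smul, moebius_filter_sum k (n + 3) hk (by omega)]
  by_cases h : k = n + 3
  · rw [if_pos h, if_pos h.symm, one_smul]
  · rw [if_neg h, if_neg (fun hh => h hh.symm), zero_smul]

lemma pow_succ_mem {R : Type*} [Ring R] {S : NonUnitalSubring R} {x : R}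
    (hx : x ∈ S) (m : ℕ) : x ^ (m + 1) ∈ S := by
  induction m with
  | zero => simpa using hx
  | succ m ih => rw [pow_succ]; exact mul_mem ih hx

lemma a_mem (p : ℕ) : aElt p ∈ NonUnitalSubring.closure {aElt p, aInvElt p, bElt p} :=
  NonUnitalSubring.subset_closure (by simp)

lemma b_mem (p : ℕ) : bElt p ∈ NonUnitalSubring.closure {aElt p, aInvElt p, bElt p} :=
  NonUnitalSubring.subset_closure (by simp)

lemma bab_mem (p m : ℕ) :
    bElt p * aElt p ^ m * bElt p ∈ NonUnitalSubring.closure {aElt p, aInvElt p, bElt p} := by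
  cases m with
  | zero =>
      rw [pow_zero, mul_one]
      exact mul_mem (b_mem p) (b_mem p)
  | succ m =>
      exact mul_mem (mul_mem (b_mem p) (pow_succ_mem (a_mem p) m)) (b_mem p)

lemma gElt_mem (p k : ℕ) :
    gElt p k ∈ NonUnitalSubring.closure {aElt p, aInvElt p, bElt p} :=
  sum_mem fun d _ => zsmul_mem (bab_mem p (d - 1)) _

/-- Additive hom putting a matrix in a single coordinate. -/
def updHom (p n₀ : ℕ) : Matrix (Fin (n₀ + 3)) (Fin (n₀ + 3)) (ZMod p) →+ BigM p where
  toFun M := Function.update (0 : BigM p) n₀ M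
  map_zero' := by
    funext n
    by_cases h : n = n₀
    · subst h; simp
    · simp [Function.update_of_ne h]
  map_add' M M' := by
    funext n
    by_cases h : n = n₀
    · subst h; simp
    · simp [Function.update_of_ne h]

lemma updHom_smul (p n₀ : ℕ) (c : ℕ) (M : Matrix (Fin (n₀ + 3)) (Fin (n₀ + 3)) (ZMod p)) :
    updHom p n₀ (c • M) = c • updHom p n₀ M := by
  funext n
  by_cases h : n = n₀
  · subst h; simp [updHom]
  · simp [updHom, Function.update_of_ne h]

lemma single_std_one_mem (p n₀ : ℕ) (i j : Fin (n₀ + 3)) :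
    updHom p n₀ (Matrix.single i j 1)
      ∈ NonUnitalSubring.closure {aElt p, aInvElt p, bElt p} := by
  set s : ℕ := n₀ + 2 - i.val with hs
  set t : ℕ := j.val + n₀ + 1 with ht
  have key : updHom p n₀ (Matrix.single i j 1)
      = aElt p ^ (s + 1) * gElt p (n₀ + 3) * aElt p ^ (t + 1) := by
    funext n
    have hcomp : (aElt p ^ (s + 1) * gElt p (n₀ + 3) * aElt p ^ (t + 1)) n
        = (aElt p n) ^ (s + 1) * gElt p (n₀ + 3) n * (aElt p n) ^ (t + 1) := rfl
    rw [hcomp, gElt_apply p _ n (by omega)]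
    by_cases h : n = n₀
    · subst h
      rw [if_pos rfl]
      have hupd : updHom p n (Matrix.single i j 1) n = Matrix.single i j 1 := by
        simp [updHom]
      have hsymm : (finRotate (n + 3) ^ (s + 1)).symm 0 = i := by
        rw [Equiv.symm_apply_eq]
        have hi : (finRotate (n + 3) ^ (s + 1)) i = 0 := by
          rw [finRotate_pow]
          exact fin_add_cast_eq_zero n i (s + 1) (by have := i.isLt; omega)
        exact hi.symm
      have hrot : (finRotate (n + 3) ^ (t + 1)) 1 = j := by
        rw [finRotate_pow]
        exact fin_one_add_cast n j (t + 1) (by omega)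
      rw [hupd, aElt_apply, pM_pow, pM_pow, pM_E_pM, hsymm, hrot]
    · rw [if_neg (fun hh => h (by omega))]
      have hupd : updHom p n₀ (Matrix.single i j 1) n = 0 := by
        simp [updHom, Function.update_of_ne h]
      rw [hupd, mul_zero, zero_mul]
  rw [key]
  exact mul_mem (mul_mem (pow_succ_mem (a_mem p) s) (gElt_mem p (n₀ + 3)))
    (pow_succ_mem (a_mem p) t)

lemma single_mem (p : ℕ) [NeZero p] (n₀ : ℕ)
    (M : Matrix (Fin (n₀ + 3)) (Fin (n₀ + 3)) (ZMod p)) :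
    Function.update (0 : BigM p) n₀ M
      ∈ NonUnitalSubring.closure {aElt p, aInvElt p, bElt p} := by
  have hM : Function.update (0 : BigM p) n₀ M = updHom p n₀ M := rfl
  rw [hM, matrix_eq_sum_single M, map_sum]
  refine sum_mem fun i _ => ?_
  rw [map_sum]
  refine sum_mem fun j _ => ?_
  have hstd : Matrix.single i j (M i j) = (M i j).val • Matrix.single i j (1 : ZMod p) := by
    rw [smul_single, nsmul_eq_mul, mul_one, ZMod.natCast_val, ZMod.cast_id]
  rw [hstd, updHom_smul]
  exact nsmul_mem (single_std_one_mem p n₀ i j) _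

end KassabovProof

open KassabovProof in
/-- **Proposition (Kassabov).**  The (possibly non-unital) subring of
`∏_{n ≥ 3} M_n(F_p)` generated by `a`, `a⁻¹` and `b` contains the restricted direct sum
`⊕_{n ≥ 3} M_n(F_p)` (all elements with finitely many nonzero coordinates).  In particular
the unital subring `R` generated by `1, a, a⁻¹, b, c` contains `⊕_{n ≥ 3} M_n(F_p)`. -/
theorem subring_contains_direct_sum (p : ℕ) (hp : p.Prime) :
    (∀ x : BigM p, {n | x n ≠ 0}.Finite →
      x ∈ NonUnitalSubring.closure {aElt p, aInvElt p, bElt p}) ∧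
    (∀ x : BigM p, {n | x n ≠ 0}.Finite →
      x ∈ Subring.closure {aElt p, aInvElt p, bElt p, cElt p}) := by
  haveI : NeZero p := ⟨hp.ne_zero⟩
  have main : ∀ x : BigM p, {n | x n ≠ 0}.Finite →
      x ∈ NonUnitalSubring.closure {aElt p, aInvElt p, bElt p} := by
    intro x hfin
    have hx : x = ∑ n ∈ hfin.toFinset, Function.update (0 : BigM p) n (x n) := by
      funext m
      rw [Finset.sum_apply]
      by_cases hm : m ∈ hfin.toFinset
      · have h1 : ∀ n ∈ hfin.toFinset, n ≠ m →
            Function.update (0 : BigM p) n (x n) m = 0 :=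
          fun n _ hn => (Function.update_of_ne (Ne.symm hn) _ _).trans rfl
        rw [Finset.sum_eq_single m h1 (fun h => absurd hm h), Function.update_self]
      · have hx0 : x m = 0 := by
          by_contra h
          exact hm (hfin.mem_toFinset.mpr h)
        rw [hx0]
        refine (Finset.sum_eq_zero fun n hn => ?_).symm
        exact (Function.update_of_ne (fun (e : m = n) => hm (by rw [e]; exact hn)) _ _).trans rfl
    rw [hx]
    exact sum_mem fun n _ => single_mem p n (x n)
  refine ⟨main, fun x hfin => ?_⟩
  have h1 := main x hfin
  have hle : NonUnitalSubring.closure {aElt p, aInvElt p, bElt p}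
      ≤ (Subring.closure {aElt p, aInvElt p, bElt p, cElt p}).toNonUnitalSubring := by
    rw [NonUnitalSubring.closure_le]
    intro y hy
    apply Subring.subset_closure
    simp only [Set.mem_insert_iff, Set.mem_singleton_iff] at hy ⊢
    tauto
  exact hle h1
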